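/- Define ψ(m,b,T) := Φ̄(m√T − b/√T) − e^{2bm} Φ̄(m√T + b/√T). For a∇b := (max(a,b)) ∧ 1, there exist universal constants C₁, C₂ > 0 such that for all m ≤ 0, b > 0, and T > 0, C₁ · ((|m·b|) ∇ (b/√T)) ≤ ψ(m,b,T) ≤ C₂ · ((|m·b|) ∇ (b/√T)). -/

import Mathlib

open MeasureTheory ProbabilityTheory Real Set
open Filter

/-- The standard Gaussian tail function `Φ̄(s) = ∫_s^∞ (2π)^{-1/2} e^{-u²/2} du`. -/
noncomputable def gaussTail (s : ℝ) : ℝ :=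
  ∫ u in Set.Ioi s, (Real.sqrt (2 * Real.pi))⁻¹ * Real.exp (-u ^ 2 / 2)

/-- `ψ(m,b,T) = Φ̄(m√T − b/√T) − e^{2bm} Φ̄(m√T + b/√T)`. -/
noncomputable def psi (m b T : ℝ) : ℝ :=
  gaussTail (m * Real.sqrt T - b / Real.sqrt T)
    - Real.exp (2 * b * m) * gaussTail (m * Real.sqrt T + b / Real.sqrt T)

/-- `a ∇ b = min (max a b) 1`. -/
noncomputable def nabla (a b : ℝ) : ℝ := min (max a b) 1

noncomputable def gdens (u : ℝ) : ℝ := (Real.sqrt (2 * Real.pi))⁻¹ * Real.exp (-u ^ 2 / 2)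

lemma sqrt_two_pi_lb : (2:ℝ) ≤ Real.sqrt (2 * Real.pi) := by
  have h := Real.sq_sqrt (show (0:ℝ) ≤ 2 * Real.pi by positivity)
  nlinarith [Real.sqrt_nonneg (2 * Real.pi), Real.pi_gt_three]

lemma sqrt_two_pi_ub : Real.sqrt (2 * Real.pi) ≤ 3 := by
  have h := Real.sq_sqrt (show (0:ℝ) ≤ 2 * Real.pi by positivity)
  nlinarith [Real.sqrt_nonneg (2 * Real.pi), Real.pi_lt_d2]

lemma gdens_nonneg (u : ℝ) : 0 ≤ gdens u :=
  mul_nonneg (inv_nonneg.2 (Real.sqrt_nonneg _)) (Real.exp_nonneg _)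

lemma gdens_le_half (u : ℝ) : gdens u ≤ 1/2 := by
  have h1 : (Real.sqrt (2 * Real.pi))⁻¹ ≤ 1/2 := by
    rw [inv_le_comm₀ (by linarith [sqrt_two_pi_lb]) (by norm_num)]
    simpa using sqrt_two_pi_lb
  have h2 : Real.exp (-u ^ 2 / 2) ≤ 1 := by
    rw [Real.exp_le_one_iff]; nlinarith [sq_nonneg u]
  calc gdens u ≤ (Real.sqrt (2 * Real.pi))⁻¹ * 1 :=
        mul_le_mul_of_nonneg_left h2 (inv_nonneg.2 (Real.sqrt_nonneg _))
    _ ≤ 1/2 := by linarith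

lemma integrable_gdens : Integrable gdens := by
  have h : Integrable (fun u : ℝ => Real.exp (-(1/2) * u ^ 2)) :=
    integrable_exp_neg_mul_sq (by norm_num)
  have := h.const_mul (Real.sqrt (2 * Real.pi))⁻¹
  refine this.congr (Eventually.of_forall fun u => ?_)
  simp only [gdens]
  ring_nf

lemma gaussTail_eq (s : ℝ) : gaussTail s = ∫ u in Set.Ioi s, gdens u := rfl

lemma integral_gdens : ∫ u, gdens u = 1 := by
  have h : ∫ u : ℝ, Real.exp (-(1/2) * u ^ 2) = Real.sqrt (Real.pi / (1/2)) :=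
    integral_gaussian (1/2)
  have he : ∀ u : ℝ, gdens u = (Real.sqrt (2 * Real.pi))⁻¹ * Real.exp (-(1/2) * u ^ 2) := by
    intro u; simp only [gdens]; ring_nf
  rw [show (fun u => gdens u) = fun u => (Real.sqrt (2 * Real.pi))⁻¹ * Real.exp (-(1/2) * u ^ 2)
    from funext he, integral_const_mul, h]
  rw [show Real.pi / (1/2) = 2 * Real.pi by ring]
  rw [inv_mul_cancel₀ (by positivity)]

lemma gaussTail_zero : gaussTail 0 = 1/2 := by
  have h : ∫ u in Set.Ioi (0:ℝ), Real.exp (-(1/2) * u ^ 2) = Real.sqrt (Real.pi / (1/2)) / 2 :=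
    integral_gaussian_Ioi (1/2)
  rw [gaussTail_eq]
  have he : ∀ u : ℝ, gdens u = (Real.sqrt (2 * Real.pi))⁻¹ * Real.exp (-(1/2) * u ^ 2) := by
    intro u; simp only [gdens]; ring_nf
  rw [show (fun u => gdens u) = fun u => (Real.sqrt (2 * Real.pi))⁻¹ * Real.exp (-(1/2) * u ^ 2)
    from funext he, integral_const_mul, h]
  rw [show Real.pi / (1/2) = 2 * Real.pi by ring]
  rw [inv_mul_eq_div, div_div, div_eq_iff (by positivity)]
  ring

lemma gaussTail_nonneg (s : ℝ) : 0 ≤ gaussTail s := by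
  rw [gaussTail_eq]
  exact setIntegral_nonneg measurableSet_Ioi fun u _ => gdens_nonneg u

lemma gaussTail_le_one (s : ℝ) : gaussTail s ≤ 1 := by
  rw [gaussTail_eq, ← integral_gdens]
  exact setIntegral_le_integral integrable_gdens (Eventually.of_forall gdens_nonneg)

lemma gaussTail_anti {s t : ℝ} (h : s ≤ t) : gaussTail t ≤ gaussTail s := by
  rw [gaussTail_eq, gaussTail_eq]
  exact setIntegral_mono_set integrable_gdens.integrableOn
    (Eventually.of_forall gdens_nonneg) (Eventually.of_forall fun u hu => lt_of_le_of_lt h hu)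

lemma gaussTail_half {s : ℝ} (h : s ≤ 0) : 1/2 ≤ gaussTail s := by
  rw [← gaussTail_zero]; exact gaussTail_anti h

lemma gaussTail_sub {s t : ℝ} (h : s ≤ t) :
    gaussTail s - gaussTail t = ∫ u in Set.Ioc s t, gdens u := by
  have hu : Set.Ioc s t ∪ Set.Ioi t = Set.Ioi s := Set.Ioc_union_Ioi_eq_Ioi h
  have hd : Disjoint (Set.Ioc s t) (Set.Ioi t) := Set.Ioc_disjoint_Ioi le_rfl
  have := setIntegral_union hd measurableSet_Ioi integrable_gdens.integrableOn
    integrable_gdens.integrableOn (f := gdens) (μ := volume)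
  rw [hu] at this
  rw [gaussTail_eq, gaussTail_eq, this]; ring

lemma exp_two_lt_four : Real.exp (-2) ≤ 1/4 := by
  have h : (2:ℝ) ≤ Real.exp 1 := by
    have := Real.exp_one_gt_d9; linarith
  have h2 : (4:ℝ) ≤ Real.exp 2 := by
    have : Real.exp 2 = Real.exp 1 * Real.exp 1 := by
      rw [← Real.exp_add]; norm_num
    nlinarith [Real.exp_pos 1]
  rw [Real.exp_neg]
  rw [inv_le_comm₀ (Real.exp_pos 2) (by norm_num)]
  linarith

lemma exp_neg_two_lb : (1:ℝ)/8 ≤ Real.exp (-2) := by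
  have h : Real.exp 1 ≤ 2.7182818286 := le_of_lt Real.exp_one_lt_d9
  have h2 : Real.exp 2 ≤ 8 := by
    have he : Real.exp 2 = Real.exp 1 * Real.exp 1 := by
      rw [← Real.exp_add]; norm_num
    nlinarith [Real.exp_pos 1]
  rw [Real.exp_neg, le_inv_comm₀ (by norm_num) (Real.exp_pos 2)]
  linarith

lemma exp_neg_half_lb : (1:ℝ)/2 ≤ Real.exp (-(1/2)) := by
  have h : Real.exp 1 ≤ 2.7182818286 := le_of_lt Real.exp_one_lt_d9
  have he : Real.exp 1 = Real.exp (1/2) * Real.exp (1/2) := by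
    rw [← Real.exp_add]; norm_num
  have h2 : Real.exp (1/2) ≤ 2 := by nlinarith [Real.exp_pos (1/2)]
  rw [Real.exp_neg, le_inv_comm₀ (by norm_num) (Real.exp_pos (1/2))]
  linarith

/-- chord bound: `(3/8) * min v 1 ≤ 1 - exp (-(2*v))` for `v ≥ 0`. -/
lemma chord_bound {v : ℝ} (hv : 0 ≤ v) : (3/8) * min v 1 ≤ 1 - Real.exp (-(2*v)) := by
  rcases le_or_gt 1 v with h1 | h1
  · rw [min_eq_right h1]
    have : Real.exp (-(2*v)) ≤ Real.exp (-2) := by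
      apply Real.exp_le_exp.2; linarith
    have := exp_two_lt_four; linarith
  · rw [min_eq_left h1.le]
    have hc := convexOn_exp.2 (Set.mem_univ (-2 : ℝ)) (Set.mem_univ (0:ℝ))
      hv (by linarith : (0:ℝ) ≤ 1 - v) (by ring)
    simp only [smul_eq_mul] at hc
    have hc' : Real.exp (-(2*v)) ≤ v * Real.exp (-2) + (1 - v) := by
      have : v * (-2) + (1-v) * 0 = -(2*v) := by ring
      rw [this] at hc
      simpa using hc
    have := exp_two_lt_four
    nlinarith

lemma integral_Ioc_lb {s t c : ℝ} (hst : s ≤ t) (hc : ∀ u ∈ Set.Ioc s t, c ≤ gdens u) :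
    c * (t - s) ≤ ∫ u in Set.Ioc s t, gdens u := by
  have := setIntegral_ge_of_const_le_real (μ := volume) measurableSet_Ioc
    (by simp : volume (Set.Ioc s t) ≠ ⊤) hc integrable_gdens.integrableOn
  rwa [Real.volume_real_Ioc, max_eq_left (by linarith)] at this

lemma integral_Ioc_ub {s t : ℝ} (hst : s ≤ t) :
    ∫ u in Set.Ioc s t, gdens u ≤ (1/2) * (t - s) := by
  have h := setIntegral_mono_on (μ := volume) (s := Set.Ioc s t)
    integrable_gdens.integrableOn
    (integrableOn_const (by simp))
    measurableSet_Ioc (fun u _ => gdens_le_half u)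
  rw [setIntegral_const, Real.volume_real_Ioc, max_eq_left (by linarith)] at h
  calc ∫ u in Set.Ioc s t, gdens u ≤ (t - s) • (1/2 : ℝ) := h
    _ = (1/2) * (t - s) := by rw [smul_eq_mul]; ring

lemma gdens_lb {u c : ℝ} (h : u^2 ≤ c) : Real.exp (-c/2) / 3 ≤ gdens u := by
  have h1 : Real.exp (-c/2) ≤ Real.exp (-u^2/2) := Real.exp_le_exp.2 (by linarith)
  have h2 : (3:ℝ)⁻¹ ≤ (Real.sqrt (2*Real.pi))⁻¹ := by
    apply inv_anti₀ (by linarith [sqrt_two_pi_lb]) sqrt_two_pi_ub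
  unfold gdens
  calc Real.exp (-c/2) / 3 = (3:ℝ)⁻¹ * Real.exp (-c/2) := by ring
    _ ≤ (Real.sqrt (2*Real.pi))⁻¹ * Real.exp (-u^2/2) :=
        mul_le_mul h2 h1 (Real.exp_nonneg _) (inv_nonneg.2 (Real.sqrt_nonneg _))

set_option maxHeartbeats 1000000 in
/-- There are universal constants `C₁, C₂ > 0` such that for all `m ≤ 0`,
`b > 0`, `T > 0`, `C₁ (|m·b| ∇ (b/√T)) ≤ ψ(m,b,T) ≤ C₂ (|m·b| ∇ (b/√T))`. -/
theorem psi_asymp_nonpos_slope :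
    ∃ C₁ C₂ : ℝ, 0 < C₁ ∧ 0 < C₂ ∧
      ∀ m b T : ℝ, m ≤ 0 → 0 < b → 0 < T →
        C₁ * nabla |m * b| (b / Real.sqrt T) ≤ psi m b T ∧
          psi m b T ≤ C₂ * nabla |m * b| (b / Real.sqrt T) := by
  refine ⟨1/25, 3, by norm_num, by norm_num, fun m b T hm hb hT => ?_⟩
  have hsT : 0 < Real.sqrt T := Real.sqrt_pos.2 hT
  set x := m * Real.sqrt T with hxdef
  set y := b / Real.sqrt T with hydef
  have hy : 0 < y := div_pos hb hsT
  have hx : x ≤ 0 := mul_nonpos_of_nonpos_of_nonneg hm hsT.le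
  have hbm : b * m = x * y := by
    rw [hxdef, hydef]; field_simp
  set a := -x with hadef
  have ha : 0 ≤ a := neg_nonneg.2 hx
  have habs : |m * b| = a * y := by
    rw [abs_of_nonpos (mul_nonpos_of_nonpos_of_nonneg hm hb.le), hadef,
      mul_comm m b, hbm]; ring
  have hEeq : Real.exp (2 * b * m) = Real.exp (-(2*(a*y))) := by
    congr 1; rw [mul_assoc, hbm, hadef]; ring
  set s := x - y with hsdef
  set t := x + y with htdef
  have hst : s ≤ t := by rw [hsdef, htdef]; linarith
  have hI := gaussTail_sub hst
  set E := Real.exp (-(2*(a*y))) with hEdef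
  have hE1 : E ≤ 1 := Real.exp_le_one_iff.2 (by nlinarith)
  have hE0 : 0 < E := Real.exp_pos _
  have hElb : 1 - E ≤ 2*(a*y) := by
    have := Real.add_one_le_exp (-(2*(a*y))); rw [← hEdef] at this; linarith
  have hψ : psi m b T = (∫ u in Set.Ioc s t, gdens u) + (1 - E) * gaussTail t := by
    unfold psi
    rw [hEeq, ← hxdef, ← hydef, ← hsdef, ← htdef, ← hI]; ring
  have hN : nabla |m * b| (b / Real.sqrt T) = min (max (a*y) y) 1 := by
    rw [nabla, habs, ← hydef]
  rw [hN]
  set N := min (max (a*y) y) 1 with hNdef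
  have hN1 : N ≤ 1 := min_le_right _ _
  have hNmax : N ≤ max (a*y) y := min_le_left _ _
  have hg2_nonneg : 0 ≤ gaussTail t := gaussTail_nonneg t
  have hg2_le : gaussTail t ≤ 1 := gaussTail_le_one t
  have hInn : 0 ≤ ∫ u in Set.Ioc s t, gdens u :=
    setIntegral_nonneg measurableSet_Ioc fun u _ => gdens_nonneg u
  constructor
  · -- lower bound
    rcases le_total a 1 with ha1 | ha1
    · rcases le_total y 1 with hy1 | hy1
      · -- Case A : a ≤ 1, y ≤ 1
        have hNy : N ≤ y := le_trans hNmax (by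
          rw [max_le_iff]; constructor <;> nlinarith)
        have hlb : ∀ u ∈ Set.Ioc s t, (1:ℝ)/24 ≤ gdens u := by
          intro u hu
          have h1 : -(2:ℝ) ≤ u := by
            have := hu.1; rw [hsdef] at this; nlinarith
          have h2 : u ≤ 2 := by
            have := hu.2; rw [htdef] at this; nlinarith
          have := gdens_lb (c := 4) (u := u) (by nlinarith)
          have he := exp_neg_two_lb
          calc (1:ℝ)/24 ≤ Real.exp (-2) / 3 := by linarith
            _ ≤ gdens u := by
                have h4 : (-4:ℝ)/2 = -2 := by norm_num
                rw [h4] at this; exact this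
        have := integral_Ioc_lb hst hlb
        have hts : t - s = 2*y := by rw [htdef, hsdef]; ring
        rw [hts] at this
        rw [hψ]; nlinarith
      · -- Case B : a ≤ 1 ≤ y
        have hsub : Set.Ioc (-1:ℝ) 0 ⊆ Set.Ioc s t := by
          apply Set.Ioc_subset_Ioc
          · rw [hsdef]; nlinarith
          · rw [htdef]; nlinarith
        have hmono : ∫ u in Set.Ioc (-1:ℝ) 0, gdens u ≤ ∫ u in Set.Ioc s t, gdens u :=
          setIntegral_mono_set integrable_gdens.integrableOn
            (Eventually.of_forall gdens_nonneg) (HasSubset.Subset.eventuallyLE hsub)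
        have hlb : ∀ u ∈ Set.Ioc (-1:ℝ) 0, (1:ℝ)/6 ≤ gdens u := by
          intro u hu
          have := gdens_lb (c := 1) (u := u) (by nlinarith [hu.1, hu.2])
          have he := exp_neg_half_lb
          have h4 : (-1:ℝ)/2 = -(1/2) := by norm_num
          rw [h4] at this; linarith
        have := integral_Ioc_lb (by norm_num : (-1:ℝ) ≤ 0) hlb
        rw [hψ]; nlinarith
    · rcases le_total y a with hya | hya
      · -- Case C : 1 ≤ a, y ≤ a
        have hNc : N ≤ min (a*y) 1 := by
          rw [hNdef, max_eq_left (by nlinarith : y ≤ a*y)]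
        have hg2half : 1/2 ≤ gaussTail t := gaussTail_half (by rw [htdef]; linarith)
        have hch := chord_bound (v := a*y) (by positivity)
        rw [← hEdef] at hch
        have hmin0 : 0 ≤ min (a*y) 1 := le_min (by positivity) (by norm_num)
        rw [hψ]
        have h1E : 0 ≤ 1 - E := by linarith
        nlinarith [mul_le_mul hch hg2half (by norm_num) (by linarith : (0:ℝ) ≤ 1 - E)]
      · -- Case B again : 1 ≤ a ≤ y
        have hsub : Set.Ioc (-1:ℝ) 0 ⊆ Set.Ioc s t := by
          apply Set.Ioc_subset_Ioc
          · rw [hsdef]; nlinarith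
          · rw [htdef]; nlinarith
        have hmono : ∫ u in Set.Ioc (-1:ℝ) 0, gdens u ≤ ∫ u in Set.Ioc s t, gdens u :=
          setIntegral_mono_set integrable_gdens.integrableOn
            (Eventually.of_forall gdens_nonneg) (HasSubset.Subset.eventuallyLE hsub)
        have hlb : ∀ u ∈ Set.Ioc (-1:ℝ) 0, (1:ℝ)/6 ≤ gdens u := by
          intro u hu
          have := gdens_lb (c := 1) (u := u) (by nlinarith [hu.1, hu.2])
          have he := exp_neg_half_lb
          have h4 : (-1:ℝ)/2 = -(1/2) := by norm_num
          rw [h4] at this; linarith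
        have := integral_Ioc_lb (by norm_num : (-1:ℝ) ≤ 0) hlb
        rw [hψ]; nlinarith
  · -- upper bound
    have hIub := integral_Ioc_ub hst
    have hts : t - s = 2*y := by rw [htdef, hsdef]; ring
    rw [hts] at hIub
    have hψ1 : psi m b T ≤ 1 := by
      rw [hψ]
      have h1 : ∫ u in Set.Ioc s t, gdens u ≤ gaussTail s := by
        rw [gaussTail_eq]
        exact setIntegral_mono_set integrable_gdens.integrableOn
          (Eventually.of_forall gdens_nonneg)
          (HasSubset.Subset.eventuallyLE Set.Ioc_subset_Ioi_self)
      nlinarith [gaussTail_le_one s, gaussTail_anti hst]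
    have hψ2 : psi m b T ≤ y + 2*(a*y) := by
      rw [hψ]
      nlinarith
    rcases le_total (max (a*y) y) 1 with hM | hM
    · rw [hNdef, min_eq_left hM]
      have h1 : y ≤ max (a*y) y := le_max_right _ _
      have h2 : a*y ≤ max (a*y) y := le_max_left _ _
      linarith
    · rw [hNdef, min_eq_right hM]
      linarith
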